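/- For every ℓ ≥ 2, the sequence (a_n) defined by the mex recursion is not a spectrum, i.e., there exist no real numbers α, β such that a_n = ⌊nα + β⌋ for all n ≥ 0. -/
import Mathlib


/-- The minimum excluded value of a set of natural numbers. -/
noncomputable def mex (S : Set ℕ) : ℕ := sInf {m : ℕ | m ∉ S}

/-- `MexSeq ℓ a b` says that `a`, `b` are the sequences defined by
    `a 0 = ℓ+1`, `b 0 = 2ℓ+2`, and for `n ≥ 1`:
    `a n = mex({a i, b i : i < n} ∪ {0,…,ℓ})`, `b n = a n + n + ℓ + 1`. -/
def MexSeq (ℓ : ℕ) (a b : ℕ → ℕ) : Prop :=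
  a 0 = ℓ + 1 ∧ b 0 = 2 * ℓ + 2 ∧
  (∀ n : ℕ, 1 ≤ n →
    a n = mex ({m : ℕ | ∃ i < n, m = a i ∨ m = b i} ∪ {m : ℕ | m ≤ ℓ})) ∧
  (∀ n : ℕ, 1 ≤ n → b n = a n + n + ℓ + 1)

lemma mex_eq' {S : Set ℕ} {v : ℕ} (h1 : v ∉ S) (h2 : ∀ m < v, m ∈ S) :
    mex S = v := by
  have hne : ({m : ℕ | m ∉ S}).Nonempty := ⟨v, h1⟩
  have hmem : mex S ∉ S := Nat.sInf_mem hne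
  have hle : mex S ≤ v := Nat.sInf_le h1
  rcases lt_or_eq_of_le hle with h | h
  · exact absurd (h2 _ h) hmem
  · exact h

/-- The closed-form value of the `a` sequence (valid for `n ≤ 2ℓ+1`). -/
def Aseq (ℓ n : ℕ) : ℕ := if n ≤ ℓ then n + ℓ + 1 else 2 * n + 1

def Bseq (ℓ n : ℕ) : ℕ := Aseq ℓ n + n + ℓ + 1

lemma cover (ℓ n m : ℕ) (hn1 : 1 ≤ n) (hn2 : n ≤ 2 * ℓ + 1)
    (hm : m < Aseq ℓ n) :
    m ≤ ℓ ∨ ∃ i < n, m = Aseq ℓ i ∨ m = Bseq ℓ i := by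
  by_cases h0 : m ≤ ℓ
  · exact Or.inl h0
  right
  by_cases h1 : m ≤ 2 * ℓ + 1
  · refine ⟨m - ℓ - 1, ?_, Or.inl ?_⟩
    · unfold Aseq at hm; split_ifs at hm <;> omega
    · unfold Aseq; split_ifs <;> omega
  · have hnℓ : ℓ < n := by
      by_contra hc
      have : Aseq ℓ n = n + ℓ + 1 := by unfold Aseq; split_ifs <;> omega
      omega
    have hAn : Aseq ℓ n = 2 * n + 1 := by unfold Aseq; split_ifs <;> omega
    have hm2 : m ≤ 2 * n := by omega
    rcases Nat.even_or_odd m with ⟨t, ht⟩ | ⟨t, ht⟩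
    · refine ⟨t - ℓ - 1, by omega, Or.inr ?_⟩
      unfold Bseq Aseq; split_ifs <;> omega
    · refine ⟨t, by omega, Or.inl ?_⟩
      unfold Aseq; split_ifs <;> omega

lemma notmem (ℓ n i : ℕ) (hn2 : n ≤ 2 * ℓ + 1) (hi : i < n) :
    Aseq ℓ n ≠ Aseq ℓ i ∧ Aseq ℓ n ≠ Bseq ℓ i := by
  unfold Bseq Aseq; split_ifs <;> constructor <;> omega

lemma Aseq_gt (ℓ n : ℕ) : ℓ < Aseq ℓ n := by
  unfold Aseq; split_ifs <;> omega

lemma mexSeq_values (ℓ : ℕ) (a b : ℕ → ℕ) (hab : MexSeq ℓ a b) :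
    ∀ n, n ≤ 2 * ℓ + 1 → a n = Aseq ℓ n ∧ b n = Bseq ℓ n := by
  obtain ⟨h0a, h0b, hma, hmb⟩ := hab
  intro n
  induction n using Nat.strong_induction_on with
  | _ n ih =>
    intro hn
    rcases Nat.eq_zero_or_pos n with rfl | hpos
    · constructor
      · rw [h0a]; unfold Aseq; split_ifs <;> omega
      · rw [h0b]; unfold Bseq Aseq; split_ifs <;> omega
    · have haval : a n = Aseq ℓ n := by
        rw [hma n hpos]
        apply mex_eq'
        · intro hmem
          simp only [Set.mem_union, Set.mem_setOf_eq] at hmem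
          rcases hmem with ⟨i, hi, hcase⟩ | hle
          · have hia : a i = Aseq ℓ i := (ih i hi (by omega)).1
            have hib : b i = Bseq ℓ i := (ih i hi (by omega)).2
            have hnm := notmem ℓ n i hn hi
            rcases hcase with h | h
            · exact hnm.1 (h.trans hia)
            · exact hnm.2 (h.trans hib)
          · exact absurd hle (by have := Aseq_gt ℓ n; omega)
        · intro m hm
          simp only [Set.mem_union, Set.mem_setOf_eq]
          rcases cover ℓ n m hpos hn hm with h | ⟨i, hi, h⟩
          · exact Or.inr h
          · refine Or.inl ⟨i, hi, ?_⟩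
            have hia : a i = Aseq ℓ i := (ih i hi (by omega)).1
            have hib : b i = Bseq ℓ i := (ih i hi (by omega)).2
            rcases h with h | h
            · exact Or.inl (by rw [hia]; exact h)
            · exact Or.inr (by rw [hib]; exact h)
      refine ⟨haval, ?_⟩
      rw [hmb n hpos, haval]; rfl

theorem mexSeq_not_spectrum (ℓ : ℕ) (hℓ : 2 ≤ ℓ) (a b : ℕ → ℕ)
    (hab : MexSeq ℓ a b) :
    ¬ ∃ α β : ℝ, ∀ n : ℕ, (a n : ℤ) = ⌊(n : ℝ) * α + β⌋ := by
  rintro ⟨α, β, h⟩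
  have vals := mexSeq_values ℓ a b hab
  have h0 : a 0 = ℓ + 1 := hab.1
  have hℓv : a ℓ = 2 * ℓ + 1 := by
    rw [(vals ℓ (by omega)).1]; unfold Aseq; split_ifs <;> omega
  have h2ℓ : a (2 * ℓ + 1) = 4 * ℓ + 3 := by
    rw [(vals (2 * ℓ + 1) le_rfl).1]; unfold Aseq; split_ifs <;> omega
  have hle : ∀ n : ℕ, ((a n : ℝ)) ≤ (n : ℝ) * α + β := by
    intro n
    have h1 := Int.floor_le ((n : ℝ) * α + β)
    rw [← h n] at h1
    exact_mod_cast h1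
  have hlt : ∀ n : ℕ, (n : ℝ) * α + β < (a n : ℝ) + 1 := by
    intro n
    have h1 := Int.lt_floor_add_one ((n : ℝ) * α + β)
    rw [← h n] at h1
    exact_mod_cast h1
  have F0 : (ℓ : ℝ) + 1 ≤ β := by
    have := hle 0; rw [h0] at this; push_cast at this; linarith
  have F1 : (ℓ : ℝ) * α + β < 2 * ℓ + 2 := by
    have := hlt ℓ; rw [hℓv] at this; push_cast at this; linarith
  have F2 : 4 * (ℓ : ℝ) + 3 ≤ (2 * (ℓ : ℝ) + 1) * α + β := by
    have := hle (2 * ℓ + 1); rw [h2ℓ] at this; push_cast at this; linarith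
  have hL : (2 : ℝ) ≤ (ℓ : ℝ) := by exact_mod_cast hℓ
  have G1 : (ℓ : ℝ) * α < (ℓ : ℝ) + 1 := by linarith
  have G2 : 2 * (ℓ : ℝ) + 1 < (ℓ : ℝ) * α + α := by nlinarith
  have P1 : ((ℓ : ℝ) + 1) * ((ℓ : ℝ) * α) < ((ℓ : ℝ) + 1) * ((ℓ : ℝ) + 1) :=
    mul_lt_mul_of_pos_left G1 (by linarith)
  have P2 : (ℓ : ℝ) * (2 * (ℓ : ℝ) + 1) < (ℓ : ℝ) * ((ℓ : ℝ) * α + α) :=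
    mul_lt_mul_of_pos_left G2 (by linarith)
  nlinarith [P1, P2, hL]
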